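/- arXiv:1707.07581 — 4 statements merged into one kernel-verified Lean document; each statement's English description precedes it below -/
import Mathlib

section
/- If there exists a triangle-free graph on n vertices with chromatic number k, then there exists a triangle-free graph on 2n+1 vertices with chromatic number k+1. (Consequence of the Mycielski construction; in particular n(k+1) ≤ 2n(k)+1.) -/
open SimpleGraph

section Mycielski

variable {n : ℕ} (G : SimpleGraph (Fin n))

/-- Adjacency relation of the Mycielskian of `G`. -/
def myAdj : (Fin n ⊕ (Fin n ⊕ Unit)) → (Fin n ⊕ (Fin n ⊕ Unit)) → Prop
  | Sum.inl a, Sum.inl b => G.Adj a b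
  | Sum.inl a, Sum.inr (Sum.inl b) => G.Adj a b
  | Sum.inr (Sum.inl a), Sum.inl b => G.Adj a b
  | Sum.inr (Sum.inl _), Sum.inr (Sum.inr _) => True
  | Sum.inr (Sum.inr _), Sum.inr (Sum.inl _) => True
  | _, _ => False

/-- The Mycielskian of `G`. -/
def mycielski : SimpleGraph (Fin n ⊕ (Fin n ⊕ Unit)) where
  Adj := myAdj G
  symm := by
    constructor
    rintro (a | a | a) (b | b | b) h <;> simp_all [myAdj] <;> exact h.symm
  loopless := by
    constructor
    rintro (a | a | a) h <;> simp_all [myAdj]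

lemma mycielski_cliqueFree (hG : G.CliqueFree 3) : (mycielski G).CliqueFree 3 := by
  have hG' : ∀ a b c : Fin n, G.Adj a b → G.Adj a c → G.Adj b c → False := by
    intro a b c hab hac hbc
    exact hG {a, b, c} (is3Clique_triple_iff.2 ⟨hab, hac, hbc⟩)
  intro s hs
  rw [is3Clique_iff] at hs
  obtain ⟨x, y, z, hxy, hxz, hyz, -⟩ := hs
  rcases x with a | a | a <;> rcases y with b | b | b <;> rcases z with c | c | c <;>
    simp only [mycielski, myAdj] at hxy hxz hyz <;>
    first
      | exact hG' a b c hxy hxz hyz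
      | exact hG' b a c (G.symm hxy) hyz hxz
      | exact hG' c a b (G.symm hxz) (G.symm hyz) hxy
      | exact hxy
      | exact hxz
      | exact hyz

lemma mycielski_colorable {k : ℕ} (hG : G.Colorable k) : (mycielski G).Colorable (k + 1) := by
  obtain ⟨c⟩ := hG
  refine ⟨Coloring.mk (fun v => match v with
    | Sum.inl a => (c a).castSucc
    | Sum.inr (Sum.inl a) => (c a).castSucc
    | Sum.inr (Sum.inr _) => Fin.last k) ?_⟩
  rintro (a | a | a) (b | b | b) hab <;>
    simp only [mycielski, myAdj] at hab <;>
    first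
      | exact fun e => c.valid hab (Fin.castSucc_inj.mp e)
      | exact (Fin.castSucc_lt_last _).ne
      | exact (Fin.castSucc_lt_last _).ne'

lemma mycielski_not_colorable {k : ℕ} (hk : 1 ≤ k) (hG : ¬ G.Colorable (k - 1)) :
    ¬ (mycielski G).Colorable k := by
  rintro ⟨C⟩
  apply hG
  set w : Fin n ⊕ (Fin n ⊕ Unit) := Sum.inr (Sum.inr ()) with hw
  have key : ∀ a : Fin n, C (Sum.inr (Sum.inl a)) ≠ C w := by
    intro a
    exact C.valid (by simp [mycielski, myAdj, hw])
  let c' : Fin n → {x : Fin k // x ≠ C w} := fun i =>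
    if h : C (Sum.inl i) = C w then ⟨C (Sum.inr (Sum.inl i)), key i⟩
    else ⟨C (Sum.inl i), h⟩
  have hc' : ∀ {a b : Fin n}, G.Adj a b → c' a ≠ c' b := by
    intro a b hab
    have h1 : C (Sum.inl a) ≠ C (Sum.inl b) := C.valid hab
    have h2 : C (Sum.inr (Sum.inl a)) ≠ C (Sum.inl b) :=
      C.valid (show (mycielski G).Adj _ _ from hab)
    have h3 : C (Sum.inl a) ≠ C (Sum.inr (Sum.inl b)) :=
      C.valid (show (mycielski G).Adj _ _ from hab)
    simp only [c']
    split_ifs with ha hb hb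
    · exact absurd (ha.trans hb.symm) h1
    · exact fun e => h2.symm (congrArg Subtype.val e).symm |>.elim
    · exact fun e => h3 (congrArg Subtype.val e)
    · exact fun e => h1 (congrArg Subtype.val e)
  have hcol : G.Colorable (Fintype.card {x : Fin k // x ≠ C w}) :=
    (Coloring.mk c' hc').colorable
  have hcard : Fintype.card {x : Fin k // x ≠ C w} = k - 1 := by
    simp [Fintype.card_subtype_compl]
  rw [hcard] at hcol
  exact hcol

end Mycielski

/-- If there exists a triangle-free graph on `n` vertices with chromatic number `k`, then
there exists a triangle-free graph on `2 * n + 1` vertices with chromatic number `k + 1`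
(a consequence of the Mycielski construction). -/
theorem exists_triangle_free_succ_chromatic_of_exists
    (n k : ℕ)
    (h : ∃ G : SimpleGraph (Fin n), G.CliqueFree 3 ∧ G.chromaticNumber = (k : ℕ∞)) :
    ∃ H : SimpleGraph (Fin (2 * n + 1)),
      H.CliqueFree 3 ∧ H.chromaticNumber = ((k + 1 : ℕ) : ℕ∞) := by
  obtain ⟨G, hfree, hchrom⟩ := h
  have hGk : G.Colorable k := chromaticNumber_le_iff_colorable.mp (le_of_eq hchrom)
  set M := mycielski G with hM
  -- M is (k+1)-colorable
  have hMc : M.Colorable (k + 1) := mycielski_colorable G hGk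
  -- M is not k-colorable
  have hMnc : ¬ M.Colorable k := by
    rcases Nat.eq_zero_or_pos k with rfl | hk
    · intro hc
      have := M.isEmpty_of_colorable_zero hc
      exact this.elim (Sum.inr (Sum.inr ()))
    · apply mycielski_not_colorable G hk
      intro hc
      have : G.chromaticNumber ≤ (k - 1 : ℕ) := hc.chromaticNumber_le
      rw [hchrom, Nat.cast_le] at this
      omega
  have hMchrom : M.chromaticNumber = ((k + 1 : ℕ) : ℕ∞) := by
    rw [hMc.chromaticNumber_eq_sInf]
    norm_cast
    apply le_antisymm
    · exact Nat.sInf_le hMc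
    · apply le_csInf ⟨k + 1, by exact hMc⟩
      intro m hm
      have hm' : M.Colorable m := hm
      by_contra hlt
      push_neg at hlt
      exact hMnc (hm'.mono (by omega))
  -- transport to Fin (2n+1)
  have e : (Fin n ⊕ (Fin n ⊕ Unit)) ≃ Fin (2 * n + 1) :=
    Fintype.equivFinOfCardEq (by simp; omega)
  refine ⟨M.map e.toEmbedding, ?_, ?_⟩
  · exact (cliqueFree_map_iff).2 (mycielski_cliqueFree G hfree)
  · have iso : M ≃g M.map e.toEmbedding := SimpleGraph.Iso.map e M
    have h1 := chromaticNumber_mono_of_hom iso.toEmbedding.toHom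
    have h2 := chromaticNumber_mono_of_hom iso.symm.toEmbedding.toHom
    rw [← hMchrom]
    exact le_antisymm h2 h1
end

section
/- Let G be a maximal triangle-free graph on n vertices with chromatic number k and maximum degree d, let v be a vertex of degree d, and assume n ≥ d + 2. Then the induced subgraph G' of G on the vertices outside the closed neighbourhood of v (i.e., outside {v} ∪ N(v)) is a triangle-free graph on n − d − 1 vertices with maximum degree at most d − 1, and the chromatic number of G' equals k − 1 or k. -/
/-- A graph is maximal triangle-free if it is triangle-free and inserting any edge between
two distinct non-adjacent vertices creates a triangle. -/
def MaximalTriangleFree {V : Type*} (G : SimpleGraph V) : Prop :=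
  G.CliqueFree 3 ∧
    ∀ u w : V, u ≠ w → ¬ G.Adj u w → ¬ (G ⊔ SimpleGraph.edge u w).CliqueFree 3

lemma common_neighbor {V : Type*} (G : SimpleGraph V)
    (hmtf : MaximalTriangleFree G) (u v : V) (huv : u ≠ v) (hadj : ¬ G.Adj u v) :
    ∃ w, G.Adj u w ∧ G.Adj v w := by
  classical
  have h := hmtf.2 u v huv hadj
  rw [SimpleGraph.CliqueFree] at h
  push_neg at h
  obtain ⟨t, ht⟩ := h
  obtain ⟨a, b, c, hab, hac, hbc, rfl⟩ := Finset.card_eq_three.mp ht.card_eq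
  rw [SimpleGraph.is3Clique_triple_iff] at ht
  obtain ⟨h1, h2, h3⟩ := ht
  have htf3 : ¬ (G.Adj a b ∧ G.Adj a c ∧ G.Adj b c) := fun ⟨x1, x2, x3⟩ =>
    hmtf.1 _ (SimpleGraph.is3Clique_triple_iff.mpr ⟨x1, x2, x3⟩)
  simp only [SimpleGraph.sup_adj, SimpleGraph.edge_adj] at h1 h2 h3
  have rsnd : ∀ {x y : V}, (G.Adj x y ∨ ((x = u ∧ y = v ∨ x = v ∧ y = u) ∧ x ≠ y)) →
      y ≠ u → y ≠ v → G.Adj x y := by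
    rintro x y (h | ⟨(⟨rfl, rfl⟩ | ⟨rfl, rfl⟩), -⟩) h1 h2
    exacts [h, absurd rfl h2, absurd rfl h1]
  have rfst : ∀ {x y : V}, (G.Adj x y ∨ ((x = u ∧ y = v ∨ x = v ∧ y = u) ∧ x ≠ y)) →
      x ≠ u → x ≠ v → G.Adj x y := by
    rintro x y (h | ⟨(⟨rfl, rfl⟩ | ⟨rfl, rfl⟩), -⟩) h1 h2
    exacts [h, absurd rfl h1, absurd rfl h2]
  rcases h1 with h1 | ⟨(⟨rfl, rfl⟩ | ⟨rfl, rfl⟩), -⟩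
  · rcases h2 with h2 | ⟨(⟨rfl, rfl⟩ | ⟨rfl, rfl⟩), -⟩
    · rcases h3 with h3 | ⟨(⟨rfl, rfl⟩ | ⟨rfl, rfl⟩), -⟩
      · exact absurd ⟨h1, h2, h3⟩ htf3
      · exact ⟨a, h1.symm, h2.symm⟩
      · exact ⟨a, h2.symm, h1.symm⟩
    · exact ⟨b, h1, (rfst h3 (Ne.symm hab) hbc).symm⟩
    · exact ⟨b, (rfst h3 hbc (Ne.symm hab)).symm, h1⟩
  · exact ⟨c, rsnd h2 (Ne.symm hac) (Ne.symm hbc), rsnd h3 (Ne.symm hac) (Ne.symm hbc)⟩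
  · exact ⟨c, rsnd h3 (Ne.symm hbc) (Ne.symm hac), rsnd h2 (Ne.symm hbc) (Ne.symm hac)⟩

/-- Let `G` be a maximal triangle-free graph on `n` vertices with chromatic number `k` and
maximum degree `d`, let `v` be a vertex of degree `d`, and assume `n ≥ d + 2`. Then the
subgraph `G'` induced on the vertices outside the closed neighbourhood of `v` is a
triangle-free graph on `n - d - 1` vertices with maximum degree at most `d - 1`, and the
chromatic number of `G'` equals `k - 1` or `k`. -/
theorem induce_compl_closedNeighborhood_of_maximalTriangleFree
    {V : Type*} [Fintype V] [DecidableEq V] (G : SimpleGraph V) [DecidableRel G.Adj]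
    (n k d : ℕ)
    (hmtf : MaximalTriangleFree G)
    (hcard : Fintype.card V = n)
    (hchi : G.chromaticNumber = (k : ℕ∞))
    (hmax : G.maxDegree = d)
    (v : V) (hv : G.degree v = d)
    (hn : d + 2 ≤ n) :
    (G.induce {u : V | u ∉ insert v (G.neighborSet v)}).CliqueFree 3 ∧
    ({u : V | u ∉ insert v (G.neighborSet v)}).ncard = n - d - 1 ∧
    (∀ u : ({u : V | u ∉ insert v (G.neighborSet v)} : Set V),
      ((G.induce {u : V | u ∉ insert v (G.neighborSet v)}).neighborSet u).ncard ≤ d - 1) ∧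
    ((G.induce {u : V | u ∉ insert v (G.neighborSet v)}).chromaticNumber = ((k - 1 : ℕ) : ℕ∞) ∨
      (G.induce {u : V | u ∉ insert v (G.neighborSet v)}).chromaticNumber = (k : ℕ∞)) := by
  classical
  set S : Set V := {u : V | u ∉ insert v (G.neighborSet v)} with hSdef
  have hmemS : ∀ u : V, u ∈ S ↔ u ≠ v ∧ ¬ G.Adj v u := by
    intro u
    simp [hSdef]
  have part1 : (G.induce S).CliqueFree 3 :=
    SimpleGraph.CliqueFree.comap (SimpleGraph.Embedding.induce S).isContained hmtf.1
  -- cardinality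
  have hNv : (G.neighborSet v).ncard = d := by
    rw [Set.ncard_eq_toFinset_card']
    have he : (G.neighborSet v).toFinset = G.neighborFinset v := by ext; simp
    rw [he]; exact hv
  have hins : (insert v (G.neighborSet v)).ncard = d + 1 := by
    rw [Set.ncard_insert_of_notMem (by simp), hNv]
  have hScard : S.ncard = n - d - 1 := by
    have hSc : S = (insert v (G.neighborSet v))ᶜ := rfl
    have h2 := Set.ncard_add_ncard_compl (insert v (G.neighborSet v))
    rw [Nat.card_eq_fintype_card, hcard, hins] at h2
    rw [hSc]
    omega
  -- degrees
  have hdeg : ∀ x : V, (G.neighborSet x).ncard = G.degree x := by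
    intro x
    rw [Set.ncard_eq_toFinset_card']
    have he : (G.neighborSet x).toFinset = G.neighborFinset x := by ext; simp
    rw [he, SimpleGraph.card_neighborFinset_eq_degree]
  have part3 : ∀ u : S, ((G.induce S).neighborSet u).ncard ≤ d - 1 := by
    intro u
    obtain ⟨hune, hnadj⟩ := (hmemS u.1).mp u.2
    obtain ⟨w, hw1, hw2⟩ := common_neighbor G hmtf u.1 v hune (fun h => hnadj h.symm)
    have hwS : w ∉ S := fun hw => ((hmemS w).mp hw).2 hw2
    have himg : Subtype.val '' ((G.induce S).neighborSet u) ⊆ G.neighborSet u.1 \ {w} := by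
      rintro x ⟨y, hy, rfl⟩
      refine ⟨hy, fun hx => hwS (hx ▸ y.2)⟩
    have hdle : G.degree u.1 ≤ d := hmax ▸ G.degree_le_maxDegree u.1
    calc ((G.induce S).neighborSet u).ncard
        = (Subtype.val '' ((G.induce S).neighborSet u)).ncard :=
          (Set.ncard_image_of_injective _ Subtype.val_injective).symm
      _ ≤ (G.neighborSet u.1 \ {w}).ncard := Set.ncard_le_ncard himg (Set.toFinite _)
      _ = (G.neighborSet u.1).ncard - 1 := Set.ncard_diff_singleton_of_mem hw1
      _ ≤ d - 1 := by rw [hdeg]; omega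
  -- chromatic number
  set G' := G.induce S with hG'
  have hfin : G'.chromaticNumber ≠ ⊤ :=
    ne_top_of_le_ne_top (ENat.coe_ne_top _) G'.colorable_of_fintype.chromaticNumber_le
  set m := G'.chromaticNumber.toNat with hm
  have hmeq : G'.chromaticNumber = (m : ℕ∞) := (ENat.coe_toNat hfin).symm
  have hcolm : G'.Colorable m := G'.colorable_chromaticNumber_of_fintype
  have hGk : G.Colorable k := by
    have := G.colorable_chromaticNumber_of_fintype
    rw [hchi] at this
    simpa using this
  have hm_le_k : m ≤ k := by
    have := (SimpleGraph.Colorable.of_hom (SimpleGraph.Embedding.induce S).toHom hGk).chromaticNumber_le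
    rw [hmeq] at this
    exact_mod_cast this
  have hSne : S.Nonempty := Set.nonempty_of_ncard_ne_zero (by omega)
  have hm1 : 1 ≤ m := by
    rcases hSne with ⟨x, hx⟩
    by_contra h
    have hm0 : m = 0 := by omega
    obtain ⟨c0⟩ := hcolm
    rw [hm0] at c0
    exact (c0 ⟨x, hx⟩).elim0
  obtain ⟨c'⟩ := hcolm
  have hcolk : G.Colorable (m + 1) := by
    refine ⟨SimpleGraph.Coloring.mk
      (fun u => if h : u ∈ S then (c' ⟨u, h⟩).castSucc
        else if u = v then ⟨0, by omega⟩ else Fin.last m) ?_⟩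
    intro x y hxy
    by_cases hx : x ∈ S <;> by_cases hy : y ∈ S
    · rw [dif_pos hx, dif_pos hy]
      intro hc
      have hadj' : G'.Adj ⟨x, hx⟩ ⟨y, hy⟩ := hxy
      exact c'.valid hadj' (Fin.castSucc_injective m hc)
    · rw [dif_pos hx, dif_neg hy]
      have hy' : y = v ∨ G.Adj v y := or_iff_not_imp_left.mpr (by simpa [hSdef] using hy)
      rcases hy' with rfl | hy'
      · exact absurd hxy.symm ((hmemS x).mp hx).2
      · rw [if_neg (fun h => G.irrefl (h ▸ hy'))]
        exact (Fin.castSucc_lt_last _).ne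
    · rw [dif_neg hx, dif_pos hy]
      have hx' : x = v ∨ G.Adj v x := or_iff_not_imp_left.mpr (by simpa [hSdef] using hx)
      rcases hx' with rfl | hx'
      · exact absurd hxy ((hmemS y).mp hy).2
      · rw [if_neg (fun h => G.irrefl (h ▸ hx'))]
        exact ((Fin.castSucc_lt_last _).ne).symm
    · have hx' : x = v ∨ G.Adj v x := or_iff_not_imp_left.mpr (by simpa [hSdef] using hx)
      have hy' : y = v ∨ G.Adj v y := or_iff_not_imp_left.mpr (by simpa [hSdef] using hy)
      rcases hx' with rfl | hx' <;> rcases hy' with rfl | hy'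
      · exact absurd rfl hxy.ne
      · rw [dif_neg hx, dif_neg hy, if_pos rfl, if_neg (fun h => G.irrefl (h ▸ hy'))]
        intro hc
        have := congrArg Fin.val hc
        simp [Fin.last] at this
        omega
      · rw [dif_neg hx, dif_neg hy, if_neg (fun h => G.irrefl (h ▸ hx')), if_pos rfl]
        intro hc
        have := congrArg Fin.val hc
        simp [Fin.last] at this
        omega
      · exact absurd (SimpleGraph.is3Clique_triple_iff.mpr ⟨hx', hy', hxy⟩) (hmtf.1 _)
  have hk_le : k ≤ m + 1 := by
    have := hcolk.chromaticNumber_le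
    rw [hchi] at this
    exact_mod_cast this
  refine ⟨part1, hScard, part3, ?_⟩
  rcases (by omega : m = k - 1 ∨ m = k) with h | h
  · left; rw [hmeq, h]
  · right; rw [hmeq, h]
end

section
/- There exists a 7-regular triangle-free graph on 24 vertices whose chromatic number is 5. -/
namespace TF24

/-! We construct an explicit 7-regular triangle-free graph on 24 vertices whose
chromatic number is 5.  The graph is given by adjacency bitmasks.  The hard part,
non-4-colorability, is verified by a kernel-evaluated backtracking search whose
soundness is proved: any proper 4-colouring (normalised so that vertex 0 has
colour 0 and vertex 1 colour 1) would force the search to succeed, but the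
search computes to `false`. -/

/-- Adjacency bitmasks: `u` is adjacent to `v` iff bit `v` of `masks[u]` is set. -/
def masks : List Nat :=
  [4751910, 8471633, 9443401, 599188, 4231466, 2173073, 565638, 4342376,
   8537680, 1120641, 4462858, 575012, 2237972, 9457768, 2369922, 2492497,
   4588074, 1675648, 10077184, 2492489, 6693380, 10014752, 9503889, 6562054]

def adjB (u v : Nat) : Bool := (masks.getD u 0).testBit v

theorem adjB_symm : ∀ u v : Fin 24, adjB u.val v.val = true → adjB v.val u.val = true := by
  decide

theorem adjB_irrefl : ∀ v : Fin 24, ¬ (adjB v.val v.val = true) := by decide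

/-- The graph. -/
def G24 : SimpleGraph (Fin 24) where
  Adj u v := adjB u.val v.val = true
  symm := ⟨fun u v h => adjB_symm u v h⟩
  loopless := ⟨fun v h => adjB_irrefl v h⟩

instance : DecidableRel G24.Adj := fun _ _ => inferInstanceAs (Decidable (_ = true))

/-- Lists of earlier neighbours (neighbours `j < v` of vertex `v`). -/
def nbl : Nat → List Nat
  | 1 => [0]
  | 2 => [0]
  | 3 => [2]
  | 4 => [1, 3]
  | 5 => [0, 4]
  | 6 => [1, 2]
  | 7 => [3, 5, 6]
  | 8 => [4, 6]
  | 9 => [0, 7, 8]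
  | 10 => [1, 3, 8]
  | 11 => [2, 5, 9, 10]
  | 12 => [2, 4, 9, 10]
  | 13 => [3, 5, 6, 12]
  | 14 => [1, 7, 8, 11, 13]
  | 15 => [0, 4, 6, 11]
  | 16 => [1, 3, 5, 9]
  | 17 => [7, 8, 12, 15, 16]
  | 18 => [10, 14, 15, 16]
  | 19 => [0, 3, 6, 11, 17, 18]
  | 20 => [2, 9, 13, 17, 18]
  | 21 => [5, 12, 14, 15, 19, 20]
  | 22 => [0, 4, 7, 10, 16, 20]
  | 23 => [1, 2, 8, 13, 18, 21, 22]
  | _ => []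

theorem nbl_sound : ∀ v : Fin 24, ∀ j ∈ nbl v.val, j < v.val ∧ adjB v.val j = true := by
  decide

/-- Partial colourings are packed as base-4 numbers: the colour of vertex `j`
is digit `j`.  `compat c P L = true` iff colour `c` conflicts with no vertex
whose power `4^j` is listed in `L`. -/
noncomputable def compat (c P : Nat) (L : List Nat) : Bool :=
  List.rec true (fun q _ ih => cond (Nat.beq (Nat.mod (Nat.div P q) 4) c) false ih) L

/-- Backtracking search over the remaining rows of earlier-neighbour data.
`p4` is `4^v` for the current vertex `v`. -/
noncomputable def search : List (List Nat) → Nat → Nat → Bool :=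
  List.rec (fun _ _ => true)
    (fun nb _ ih p4 P =>
      cond (cond (compat 0 P nb) (ih (4 * p4) P) false) true
      (cond (cond (compat 1 P nb) (ih (4 * p4) (P + p4)) false) true
      (cond (cond (compat 2 P nb) (ih (4 * p4) (P + 2 * p4)) false) true
            (cond (compat 3 P nb) (ih (4 * p4) (P + 3 * p4)) false))))

theorem search_cons (nb : List Nat) (L : List (List Nat)) (p4 P : Nat) :
    search (nb :: L) p4 P =
      cond (cond (compat 0 P nb) (search L (4 * p4) P) false) true
      (cond (cond (compat 1 P nb) (search L (4 * p4) (P + p4)) false) true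
      (cond (cond (compat 2 P nb) (search L (4 * p4) (P + 2 * p4)) false) true
            (cond (compat 3 P nb) (search L (4 * p4) (P + 3 * p4)) false))) := rfl

def rowsFrom : Nat → Nat → List (List Nat)
  | 0, _ => []
  | fuel + 1, v => (nbl v).map (fun j => 4 ^ j) :: rowsFrom fuel (v + 1)

def pack (f : Nat → Nat) : Nat → Nat
  | 0 => 0
  | v + 1 => pack f v + f v * 4 ^ v

theorem pack_lt (f : Nat → Nat) (hf : ∀ u, f u < 4) : ∀ v, pack f v < 4 ^ v := by
  intro v
  induction v with
  | zero => simp [pack]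
  | succ v ih =>
      have h2 : f v * 4 ^ v ≤ 3 * 4 ^ v := Nat.mul_le_mul_right _ (by have := hf v; omega)
      have h3 : pack f (v + 1) = pack f v + f v * 4 ^ v := rfl
      have h4 : (4 : Nat) ^ (v + 1) = 4 ^ v + 3 * 4 ^ v := by ring
      rw [h3, h4]
      omega

theorem digit (f : Nat → Nat) (hf : ∀ u, f u < 4) :
    ∀ v j, j < v → pack f v / 4 ^ j % 4 = f j := by
  intro v
  induction v with
  | zero => intro j hj; omega
  | succ v ih =>
      intro j hj
      have hrw : pack f (v + 1) = pack f v + f v * 4 ^ v := rfl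
      rcases Nat.lt_or_ge j v with h | h
      · have hpow : (4 : Nat) ^ (v - j - 1) * 4 * 4 ^ j = 4 ^ v := by
          rw [← pow_succ, ← pow_add, show v - j - 1 + 1 + j = v from by omega]
        have e1 : pack f v + f v * 4 ^ v
            = pack f v + (f v * 4 ^ (v - j - 1) * 4) * 4 ^ j := by
          rw [← hpow]; ring
        rw [hrw, e1, Nat.add_mul_div_right _ _ (show 0 < 4 ^ j from Nat.pow_pos (by norm_num)),
          Nat.add_mul_mod_self_right]
        exact ih j h
      · have hjv : j = v := by omega
        subst hjv
        rw [hrw, Nat.add_mul_div_right _ _ (show 0 < 4 ^ j from Nat.pow_pos (by norm_num)),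
          Nat.div_eq_of_lt (pack_lt f hf j), Nat.zero_add,
          Nat.mod_eq_of_lt (hf j)]

theorem compat_of (c P : Nat) :
    ∀ L : List Nat, (∀ q ∈ L, P / q % 4 ≠ c) → compat c P L = true := by
  intro L
  induction L with
  | nil => intro _; rfl
  | cons q L ihL =>
      intro h
      show cond (Nat.beq (P / q % 4) c) false (compat c P L) = true
      rcases hbeq : Nat.beq (P / q % 4) c with _ | _
      · exact ihL (fun q hq => h q (List.mem_cons_of_mem _ hq))
      · exact absurd (Nat.eq_of_beq_eq_true hbeq) (h q List.mem_cons_self)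

theorem branch_true : ∀ a b c d e f g h : Bool,
    ((a && b) || ((c && d) || ((e && f) || (g && h)))) = true →
    cond (cond a b false) true
      (cond (cond c d false) true
        (cond (cond e f false) true (cond g h false))) = true := by decide

theorem search_true (F : Nat → Nat) (hb : ∀ u, F u < 4)
    (hp : ∀ u w, u < 24 → w < 24 → adjB u w = true → F u ≠ F w) :
    ∀ fuel v, v + fuel = 24 → search (rowsFrom fuel v) (4 ^ v) (pack F v) = true := by
  intro fuel
  induction fuel with
  | zero => intro v _; rfl
  | succ fuel ih =>
      intro v hv
      have hv24 : v < 24 := by omega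
      have hFv4 : F v < 4 := hb v
      have hcompat : compat (F v) (pack F v) ((nbl v).map (fun j => 4 ^ j)) = true := by
        apply compat_of
        intro q hq
        rcases List.mem_map.mp hq with ⟨j, hjmem, rfl⟩
        rcases nbl_sound ⟨v, hv24⟩ j hjmem with ⟨hjv, hadj⟩
        rw [digit F hb v j hjv]
        exact fun hjeq => hp v j hv24 (by omega) hadj hjeq.symm
      have hnext : search (rowsFrom fuel (v + 1)) (4 * 4 ^ v)
          (pack F v + F v * 4 ^ v) = true := by
        have h44 : (4 : Nat) ^ (v + 1) = 4 * 4 ^ v := by ring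
        have hpk : pack F (v + 1) = pack F v + F v * 4 ^ v := rfl
        have := ih (v + 1) (by omega)
        rw [h44, hpk] at this
        exact this
      have hrows : rowsFrom (fuel + 1) v
          = (nbl v).map (fun j => 4 ^ j) :: rowsFrom fuel (v + 1) := rfl
      rw [hrows, search_cons]
      apply branch_true
      have hcases : F v = 0 ∨ F v = 1 ∨ F v = 2 ∨ F v = 3 := by omega
      rcases hcases with h0 | h1 | h2 | h3
      · rw [h0] at hcompat hnext
        rw [hcompat]
        rw [show pack F v + 0 * 4 ^ v = pack F v from by ring] at hnext
        rw [hnext]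
        rfl
      · rw [h1] at hcompat hnext
        rw [hcompat]
        rw [show pack F v + 1 * 4 ^ v = pack F v + 4 ^ v from by ring] at hnext
        rw [hnext]
        simp
      · rw [h2] at hcompat hnext
        rw [hcompat, hnext]
        simp
      · rw [h3] at hcompat hnext
        rw [hcompat, hnext]
        simp

set_option maxHeartbeats 12000000 in
theorem search_false : search (rowsFrom 22 2) (4 ^ 2) 4 = false := by decide

theorem not_colorable_four : ¬ G24.Colorable 4 := by
  rintro ⟨C⟩
  have hadj01 : G24.Adj 0 1 := by decide
  let σ1 : Equiv.Perm (Fin 4) := Equiv.swap (C 0) 0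
  let C1 : Fin 24 → Fin 4 := fun v => σ1 (C v)
  have hC1 : ∀ u w, G24.Adj u w → C1 u ≠ C1 w := fun u w h hc =>
    C.valid h (σ1.injective hc)
  have hC10 : C1 0 = 0 := Equiv.swap_apply_left _ _
  have hC11ne : C1 1 ≠ 0 := fun h => hC1 0 1 hadj01 (hC10.trans h.symm)
  let σ2 : Equiv.Perm (Fin 4) := Equiv.swap (C1 1) 1
  let g : Fin 24 → Fin 4 := fun v => σ2 (C1 v)
  have hg : ∀ u w, G24.Adj u w → g u ≠ g w := fun u w h hc =>
    hC1 u w h (σ2.injective hc)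
  have hg0 : g 0 = 0 := by
    show σ2 (C1 0) = 0
    rw [hC10]
    exact Equiv.swap_apply_of_ne_of_ne (Ne.symm hC11ne) (by decide)
  have hg1 : g 1 = 1 := Equiv.swap_apply_left _ _
  let F : Nat → Nat := fun u => if h : u < 24 then (g ⟨u, h⟩).val else 0
  have hb : ∀ u, F u < 4 := by
    intro u
    by_cases h : u < 24
    · simp only [F, dif_pos h]; exact (g ⟨u, h⟩).isLt
    · simp only [F, dif_neg h]; omega
  have hp : ∀ u w, u < 24 → w < 24 → adjB u w = true → F u ≠ F w := by
    intro u w hu hw hadj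
    simp only [F, dif_pos hu, dif_pos hw]
    intro hval
    exact hg ⟨u, hu⟩ ⟨w, hw⟩ hadj (Fin.val_injective hval)
  have hF0 : F 0 = 0 := by
    simp only [F, dif_pos (show (0:Nat) < 24 by omega)]
    exact congrArg Fin.val hg0
  have hF1 : F 1 = 1 := by
    simp only [F, dif_pos (show (1:Nat) < 24 by omega)]
    exact congrArg Fin.val hg1
  have hpk2 : pack F 2 = 4 := by
    have : pack F 2 = 0 + F 0 * 4 ^ 0 + F 1 * 4 ^ 1 := rfl
    rw [this, hF0, hF1]
    norm_num
  have htrue := search_true F hb hp 22 2 rfl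
  rw [hpk2, search_false] at htrue
  exact Bool.false_ne_true htrue

def c5 : Fin 24 → Fin 5 := fun v =>
  ([0, 1, 1, 0, 2, 1, 0, 2, 1, 3, 2, 0, 0, 2, 3, 1, 2, 3, 0, 1, 4, 2, 1, 3] :
    List (Fin 5)).getD v.val 0

set_option maxHeartbeats 1600000 in
theorem c5_valid : ∀ u v : Fin 24, G24.Adj u v → c5 u ≠ c5 v := by decide

theorem colorable_five : G24.Colorable 5 :=
  ⟨SimpleGraph.Coloring.mk c5 (fun h => c5_valid _ _ h)⟩

theorem chromatic_five : G24.chromaticNumber = 5 := by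
  apply le_antisymm
  · have h := SimpleGraph.chromaticNumber_le_iff_colorable.mpr colorable_five
    simpa using h
  · by_contra hcon
    have hlt : G24.chromaticNumber < 5 := lt_of_not_ge hcon
    have h4 : G24.chromaticNumber ≤ 4 := by
      have h45 : (5 : ℕ∞) = 4 + 1 := by norm_num
      rw [h45] at hlt
      exact (ENat.lt_add_one_iff (by norm_num)).mp hlt
    have : G24.Colorable 4 := by
      rw [← SimpleGraph.chromaticNumber_le_iff_colorable]
      simpa using h4
    exact not_colorable_four this

set_option maxHeartbeats 1600000 in
theorem adjB_no_triangle :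
    ∀ a b c : Fin 24, ¬ (G24.Adj a b ∧ G24.Adj a c ∧ G24.Adj b c) := by decide

theorem cliquefree : G24.CliqueFree 3 := by
  intro s hs
  rw [SimpleGraph.is3Clique_iff] at hs
  obtain ⟨a, b, c, hab, hac, hbc, -⟩ := hs
  exact adjB_no_triangle a b c ⟨hab, hac, hbc⟩

set_option maxHeartbeats 1600000 in
theorem degree_seven : ∀ v : Fin 24, G24.degree v = 7 := by decide

theorem regular : ∀ v, (G24.neighborSet v).ncard = 7 := by
  intro v
  rw [Set.ncard_eq_toFinset_card', ← SimpleGraph.neighborFinset_def,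
    SimpleGraph.card_neighborFinset_eq_degree]
  exact degree_seven v

end TF24

/-- There exists a 7-regular triangle-free graph on 24 vertices with chromatic number 5
(degrees are expressed via the cardinality of neighbour sets). -/
theorem exists_seven_regular_triangle_free_five_chromatic_on_24_vertices :
    ∃ G : SimpleGraph (Fin 24),
      G.CliqueFree 3 ∧ (∀ v, (G.neighborSet v).ncard = 7) ∧ G.chromaticNumber = 5 := by
  exact ⟨TF24.G24, TF24.cliquefree, TF24.regular, TF24.chromatic_five⟩
end

section
/- There exists a graph on 22 vertices of girth exactly 5 and maximum degree 7 that is 4-critical, i.e., its chromatic number is 4 and every proper subgraph (obtained by deleting at least one vertex or at least one edge) has chromatic number at most 3. -/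
namespace FourCritAux

/-- Edge list of the graph (each pair `(a,b)` with `a < b`). -/
def edges : List (ℕ × ℕ) :=
  [(0, 1), (0, 4), (0, 13), (0, 16), (1, 2), (1, 7), (1, 11), (2, 3), (2, 6), (2, 17),
   (3, 4), (3, 8), (3, 19), (4, 5), (5, 6), (5, 7), (5, 14), (5, 15), (5, 20), (5, 21),
   (6, 9), (7, 10), (8, 9), (8, 10), (8, 20), (9, 11), (9, 13), (10, 12), (10, 17),
   (11, 12), (11, 15), (12, 14), (12, 18), (13, 14), (13, 19), (15, 16), (16, 17),
   (16, 18), (17, 21), (18, 19), (18, 20), (19, 21)]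

/-- The graph. -/
def G : SimpleGraph (Fin 22) where
  Adj a b := (a.val, b.val) ∈ edges ∨ (b.val, a.val) ∈ edges
  symm := by constructor; intro a b h; exact h.symm
  loopless := by
    have h : ∀ a : Fin 22, ¬((a.val, a.val) ∈ edges ∨ (a.val, a.val) ∈ edges) := by decide
    constructor
    intro a
    exact h a

instance : DecidableRel G.Adj := fun a b =>
  inferInstanceAs (Decidable (_ ∨ _))

/-- earlier neighbours of each vertex, for the 3-colouring search -/
def checks : ℕ → List ℕ
  | 1 => [0]
  | 2 => [1]
  | 3 => [2]
  | 4 => [0, 3]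
  | 5 => [4]
  | 6 => [2, 5]
  | 7 => [1, 5]
  | 8 => [3]
  | 9 => [6, 8]
  | 10 => [7, 8]
  | 11 => [1, 9]
  | 12 => [10, 11]
  | 13 => [0, 9]
  | 14 => [5, 12, 13]
  | 15 => [5, 11]
  | 16 => [0, 15]
  | 17 => [2, 10, 16]
  | 18 => [12, 16]
  | 19 => [3, 13, 18]
  | 20 => [5, 8, 18]
  | 21 => [5, 17, 19]
  | _ => []

def newOK (L : List ℕ) (c : ℕ) : Bool :=
  (checks L.length).all fun a => L.getD a 0 != c

def search : ℕ → List ℕ → Bool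
  | 0, _ => true
  | fuel + 1, L => [0, 1, 2].any fun c => newOK L c && search fuel (L ++ [c])

set_option maxHeartbeats 4000000 in
theorem search_false : search 22 [] = false := by decide

theorem checks_sub : ∀ k < 22, ∀ a ∈ checks k, a < k ∧ (a, k) ∈ edges := by decide

theorem search_sound (f : ℕ → ℕ) (hf3 : ∀ i < 22, f i < 3)
    (hedge : ∀ p ∈ edges, f p.1 ≠ f p.2) :
    ∀ fuel k, fuel + k = 22 → search fuel ((List.range k).map f) = true := by
  intro fuel
  induction fuel with
  | zero => intro k hk; rfl
  | succ n ih =>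
    intro k hk
    have hk22 : k < 22 := by omega
    have hc := hf3 k hk22
    show ([0, 1, 2].any fun c =>
        newOK ((List.range k).map f) c && search n ((List.range k).map f ++ [c])) = true
    rw [List.any_eq_true]
    refine ⟨f k, by interval_cases h : f k <;> simp, ?_⟩
    rw [Bool.and_eq_true]
    constructor
    · rw [newOK, List.all_eq_true]
      intro a ha
      have hlen : ((List.range k).map f).length = k := by simp
      rw [hlen] at ha
      obtain ⟨hak, hmem⟩ := checks_sub k hk22 a ha
      have hget : ((List.range k).map f).getD a 0 = f a := by
        rw [List.getD_eq_getElem?_getD]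
        simp [List.getElem?_map, List.getElem?_range hak]
      rw [hget]
      simpa using hedge (a, k) hmem
    · have hstep : (List.range k).map f ++ [f k] = (List.range (k + 1)).map f := by
        rw [List.range_succ, List.map_append]; rfl
      rw [hstep]
      exact ih (k + 1) (by omega)

theorem not_colorable_three : ¬ G.Colorable 3 := by
  rintro ⟨C⟩
  set f : ℕ → ℕ := fun n => if h : n < 22 then (C ⟨n, h⟩).val else 0 with hf
  have h1 : ∀ i < 22, f i < 3 := by
    intro i hi
    simp only [hf, dif_pos hi]
    exact (C ⟨i, hi⟩).isLt
  have hE : ∀ p ∈ edges, p.1 < 22 ∧ p.2 < 22 := by decide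
  have hAdj : ∀ p ∈ edges, ∀ (h1 : p.1 < 22) (h2 : p.2 < 22),
      G.Adj ⟨p.1, h1⟩ ⟨p.2, h2⟩ := by
    intro p hp _ _
    exact Or.inl hp
  have h2 : ∀ p ∈ edges, f p.1 ≠ f p.2 := by
    intro p hp
    obtain ⟨ha, hb⟩ := hE p hp
    have hadj := hAdj p hp ha hb
    have hne := C.valid hadj
    simp only [hf, dif_pos ha, dif_pos hb]
    exact fun h => hne (Fin.ext h)
  have := search_sound f h1 h2 22 0 rfl
  rw [show (List.range 0).map f = [] from rfl, search_false] at this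
  exact Bool.false_ne_true this

/-- A 4-colouring. -/
def col4 : List ℕ := [0, 1, 0, 1, 2, 0, 1, 2, 0, 2, 1, 0, 2, 1, 3, 1, 2, 3, 0, 2, 1, 1]

def col4f : Fin 22 → Fin 4 := fun v => ⟨col4.getD v.val 0 % 4, Nat.mod_lt _ (by norm_num)⟩

theorem col4_valid : ∀ a b : Fin 22, G.Adj a b → col4f a ≠ col4f b := by decide

theorem colorable_four : G.Colorable 4 :=
  ⟨SimpleGraph.Coloring.mk col4f (fun h => col4_valid _ _ h)⟩

/-- Criticality data: for each edge, a 3-colouring valid everywhere except that edge. -/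
def critData : List ((ℕ × ℕ) × List ℕ) :=
  [((0, 1), [0, 0, 1, 0, 1, 0, 2, 1, 1, 0, 2, 2, 0, 1, 2, 1, 2, 0, 1, 2, 2, 1]),
  ((0, 4), [0, 1, 0, 1, 0, 2, 1, 0, 0, 2, 2, 0, 1, 1, 0, 1, 2, 1, 0, 2, 1, 0]),
  ((0, 13), [0, 1, 0, 1, 2, 0, 1, 2, 0, 2, 1, 0, 2, 0, 1, 2, 1, 2, 0, 2, 1, 1]),
  ((0, 16), [0, 1, 0, 1, 2, 0, 1, 2, 2, 0, 0, 2, 1, 1, 2, 1, 0, 1, 2, 0, 1, 2]),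
  ((1, 2), [0, 1, 1, 0, 1, 0, 2, 2, 2, 1, 1, 0, 2, 2, 1, 1, 2, 0, 0, 1, 1, 2]),
  ((1, 7), [0, 1, 0, 1, 2, 0, 2, 1, 0, 1, 2, 2, 0, 2, 1, 1, 2, 1, 1, 0, 2, 2]),
  ((1, 11), [0, 1, 0, 1, 2, 0, 1, 2, 0, 2, 1, 1, 0, 1, 2, 2, 1, 2, 2, 0, 1, 1]),
  ((2, 3), [0, 1, 0, 0, 1, 0, 1, 2, 1, 2, 0, 0, 1, 1, 2, 2, 1, 2, 0, 2, 2, 1]),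
  ((2, 6), [0, 1, 0, 1, 2, 1, 0, 0, 0, 2, 1, 0, 2, 1, 0, 2, 1, 2, 0, 2, 2, 0]),
  ((2, 17), [0, 1, 0, 1, 2, 0, 2, 2, 0, 1, 1, 0, 2, 2, 1, 1, 2, 0, 1, 0, 2, 1]),
  ((3, 4), [0, 1, 0, 1, 1, 2, 1, 0, 0, 2, 2, 0, 1, 1, 0, 1, 2, 1, 0, 2, 1, 0]),
  ((3, 8), [0, 1, 0, 1, 2, 0, 1, 2, 1, 2, 0, 0, 1, 1, 2, 2, 1, 2, 0, 2, 2, 1]),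
  ((3, 19), [0, 1, 0, 1, 2, 0, 2, 2, 2, 1, 0, 0, 2, 2, 1, 1, 2, 1, 0, 1, 1, 2]),
  ((4, 5), [0, 1, 0, 1, 2, 2, 1, 0, 0, 2, 2, 0, 1, 1, 0, 1, 2, 1, 0, 2, 1, 0]),
  ((5, 6), [0, 1, 0, 1, 2, 1, 1, 0, 0, 2, 1, 0, 2, 1, 0, 2, 1, 2, 0, 2, 2, 0]),
  ((5, 7), [0, 1, 0, 1, 2, 0, 2, 0, 0, 1, 2, 2, 0, 2, 1, 1, 2, 1, 1, 0, 2, 2]),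
  ((5, 14), [0, 1, 0, 1, 2, 0, 1, 2, 0, 2, 1, 0, 2, 1, 0, 2, 1, 2, 0, 2, 1, 1]),
  ((5, 15), [0, 1, 0, 1, 2, 0, 1, 2, 2, 0, 0, 2, 1, 1, 2, 0, 1, 2, 0, 2, 1, 1]),
  ((5, 20), [0, 1, 0, 1, 2, 0, 2, 2, 2, 1, 0, 0, 2, 2, 1, 1, 2, 1, 1, 0, 0, 2]),
  ((5, 21), [0, 1, 0, 1, 2, 0, 1, 2, 2, 0, 0, 2, 1, 1, 2, 1, 2, 1, 0, 2, 1, 0]),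
  ((6, 9), [0, 1, 0, 1, 2, 1, 2, 0, 0, 2, 1, 0, 2, 1, 0, 2, 1, 2, 0, 2, 2, 0]),
  ((7, 10), [0, 1, 0, 1, 2, 0, 2, 2, 0, 1, 2, 2, 0, 2, 1, 1, 2, 1, 1, 0, 2, 2]),
  ((8, 9), [0, 1, 0, 1, 2, 0, 1, 2, 2, 2, 0, 0, 1, 1, 2, 2, 1, 2, 0, 2, 1, 1]),
  ((8, 10), [0, 1, 0, 1, 2, 0, 1, 2, 0, 2, 0, 0, 1, 1, 2, 2, 1, 2, 0, 2, 1, 1]),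
  ((8, 20), [0, 1, 0, 1, 2, 0, 2, 2, 2, 1, 0, 0, 2, 2, 1, 1, 2, 1, 1, 0, 2, 2]),
  ((9, 11), [0, 1, 0, 1, 2, 0, 1, 2, 2, 0, 0, 0, 1, 1, 2, 2, 1, 2, 0, 2, 1, 1]),
  ((9, 13), [0, 1, 0, 1, 2, 0, 2, 2, 2, 1, 0, 0, 1, 1, 2, 2, 1, 2, 0, 2, 1, 1]),
  ((10, 12), [0, 1, 0, 1, 2, 0, 1, 2, 0, 2, 1, 0, 1, 1, 2, 2, 1, 2, 0, 2, 1, 1]),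
  ((10, 17), [0, 1, 0, 1, 2, 0, 2, 2, 0, 1, 1, 0, 2, 2, 1, 1, 2, 1, 1, 0, 2, 2]),
  ((11, 12), [0, 1, 0, 1, 2, 0, 1, 2, 0, 2, 1, 0, 0, 1, 2, 2, 1, 2, 2, 0, 1, 1]),
  ((11, 15), [0, 1, 0, 1, 2, 0, 1, 2, 2, 0, 0, 2, 1, 1, 2, 2, 1, 2, 0, 2, 1, 1]),
  ((12, 14), [0, 1, 0, 1, 2, 0, 1, 2, 0, 2, 1, 0, 2, 1, 2, 2, 1, 2, 0, 2, 1, 1]),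
  ((12, 18), [0, 1, 0, 1, 2, 0, 2, 2, 0, 1, 1, 0, 2, 2, 1, 2, 1, 2, 2, 0, 1, 1]),
  ((13, 14), [0, 1, 0, 1, 2, 0, 1, 2, 0, 2, 1, 0, 2, 1, 1, 2, 1, 2, 0, 2, 1, 1]),
  ((13, 19), [0, 1, 0, 1, 2, 0, 2, 2, 0, 1, 1, 0, 2, 2, 1, 2, 1, 2, 0, 2, 1, 1]),
  ((15, 16), [0, 1, 0, 1, 2, 0, 1, 2, 2, 0, 0, 2, 1, 1, 2, 1, 1, 2, 0, 2, 1, 1]),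
  ((16, 17), [0, 1, 0, 1, 2, 0, 1, 2, 2, 0, 0, 2, 1, 1, 2, 1, 2, 2, 0, 2, 1, 1]),
  ((16, 18), [0, 1, 0, 1, 2, 0, 1, 2, 2, 0, 0, 2, 1, 1, 2, 1, 2, 1, 2, 0, 1, 2]),
  ((17, 21), [0, 1, 0, 1, 2, 0, 1, 2, 2, 0, 0, 2, 1, 1, 2, 1, 2, 1, 0, 2, 1, 1]),
  ((18, 19), [0, 1, 0, 1, 2, 0, 1, 2, 2, 0, 0, 2, 1, 1, 2, 1, 2, 1, 0, 0, 1, 2]),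
  ((18, 20), [0, 1, 0, 1, 2, 0, 2, 2, 2, 1, 0, 0, 2, 2, 1, 1, 2, 1, 1, 0, 1, 2]),
  ((19, 21), [0, 1, 0, 1, 2, 0, 1, 2, 2, 0, 0, 2, 1, 1, 2, 1, 2, 1, 0, 2, 1, 2])]

theorem critData_fst : critData.map Prod.fst = edges := by decide

theorem critData_ok : ∀ d ∈ critData,
    (∀ i < 22, d.2.getD i 0 < 3) ∧
    ∀ p ∈ edges, p = d.1 ∨ d.2.getD p.1 0 ≠ d.2.getD p.2 0 := by decide

/-- every vertex has a neighbour -/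
theorem has_nbr : ∀ v : Fin 22, ∃ w, G.Adj v w := by decide

theorem sub3 (s : Set (Fin 22)) (H : SimpleGraph s) (hle : H ≤ G.induce s)
    (a b : Fin 22) (hadj : G.Adj a b)
    (hmiss : ∀ (ha : a ∈ s) (hb : b ∈ s), ¬ H.Adj ⟨a, ha⟩ ⟨b, hb⟩) :
    H.chromaticNumber ≤ 3 := by
  -- normalize the orientation so that (a.val, b.val) ∈ edges
  wlog hor : (a.val, b.val) ∈ edges generalizing a b
  · exact this b a hadj.symm (fun hb ha h => hmiss ha hb h.symm)
      (hadj.resolve_left hor)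
  obtain ⟨d, hdmem, hdfst⟩ : ∃ d ∈ critData, d.1 = (a.val, b.val) := by
    have : (a.val, b.val) ∈ critData.map Prod.fst := by rw [critData_fst]; exact hor
    obtain ⟨d, hd, hfst⟩ := List.mem_map.mp this
    exact ⟨d, hd, hfst⟩
  obtain ⟨h3, hvalid⟩ := critData_ok d hdmem
  have hcol : ∀ x : s, d.2.getD (x.val.val) 0 < 3 := fun x => h3 _ x.val.isLt
  refine SimpleGraph.Colorable.chromaticNumber_le (n := 3) ?_
  refine ⟨SimpleGraph.Coloring.mk (fun x => ⟨d.2.getD (x.val.val) 0, hcol x⟩) ?_⟩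
  intro x y hxy hContra
  have hGadj : G.Adj x.val y.val := hle hxy
  have hval : d.2.getD (x.val.val) 0 = d.2.getD (y.val.val) 0 :=
    congrArg Fin.val hContra
  rcases hGadj with hm | hm
  · rcases hvalid _ hm with heq | hne
    · -- (x.val.val, y.val.val) = (a.val, b.val)
      rw [hdfst] at heq
      have hxa : x.val = a := Fin.ext (congrArg Prod.fst heq)
      have hyb : y.val = b := Fin.ext (congrArg Prod.snd heq)
      have hxs : a ∈ s := hxa ▸ x.prop
      have hys : b ∈ s := hyb ▸ y.prop
      apply hmiss hxs hys
      have hx : x = ⟨a, hxs⟩ := Subtype.ext hxa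
      have hy : y = ⟨b, hys⟩ := Subtype.ext hyb
      rw [← hx, ← hy]
      exact hxy
    · exact hne hval
  · rcases hvalid _ hm with heq | hne
    · rw [hdfst] at heq
      have hya : y.val = a := Fin.ext (congrArg Prod.fst heq)
      have hxb : x.val = b := Fin.ext (congrArg Prod.snd heq)
      have hys : a ∈ s := hya ▸ y.prop
      have hxs : b ∈ s := hxb ▸ x.prop
      apply hmiss hys hxs
      have hy : y = ⟨a, hys⟩ := Subtype.ext hya
      have hx : x = ⟨b, hxs⟩ := Subtype.ext hxb
      rw [← hx, ← hy]
      exact hxy.symm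
    · exact hne hval.symm

/-- the 5-cycle 0-1-2-3-4-0 -/
def c5 : G.Walk 0 0 :=
  .cons (show G.Adj 0 1 by decide)
    (.cons (show G.Adj 1 2 by decide)
      (.cons (show G.Adj 2 3 by decide)
        (.cons (show G.Adj 3 4 by decide)
          (.cons (show G.Adj 4 0 by decide) .nil))))

theorem c5_isCycle : c5.IsCycle := by
  rw [SimpleGraph.Walk.isCycle_def, SimpleGraph.Walk.isTrail_def]
  refine ⟨?_, ?_, ?_⟩
  · decide
  · simp [c5]
  · decide

theorem no_triangle : ∀ a b c : Fin 22, G.Adj a b → G.Adj b c → G.Adj c a → False := by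
  decide

theorem common_nbrs : ∀ a c : Fin 22, a ≠ c →
    (Finset.univ.filter fun x => G.Adj a x ∧ G.Adj c x).card ≤ 1 := by
  decide

theorem egirth_eq : G.egirth = 5 := by
  apply le_antisymm
  · calc G.egirth ≤ (c5.length : ℕ∞) := by
          apply iInf_le_of_le 0
          apply iInf_le_of_le c5
          exact iInf_le _ c5_isCycle
      _ = 5 := by
          have hl : c5.length = 5 := rfl
          rw [hl]
          norm_cast
  · rw [SimpleGraph.le_egirth]
    intro a w hw
    have h3 := hw.three_le_length
    by_contra hlt
    push_neg at hlt
    have hlen : w.length = 3 ∨ w.length = 4 := by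
      have : (w.length : ℕ∞) < (5 : ℕ) := by exact_mod_cast hlt
      have := (Nat.cast_lt (α := ℕ∞)).mp this
      omega
    clear hlt
    cases w with
    | nil => simp at h3
    | cons h1 p =>
      cases p with
      | nil => simp at h3
      | cons h2 q =>
        cases q with
        | nil => simp at h3
        | cons h3' r =>
          cases r with
          | nil => exact no_triangle _ _ _ h1 h2 h3'
          | cons h4 t =>
            cases t with
            | nil =>
              -- 4-cycle a-b-c-d-a; get distinctness from nodup support
              rename_i b c d
              have hnd := hw.2
              simp [SimpleGraph.Walk.support_cons] at hnd
              have hac : a ≠ c := fun h => hnd.2.1.2 h.symm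
              have hbd : b ≠ d := hnd.1.2.1
              have hb : b ∈ Finset.univ.filter fun x => G.Adj a x ∧ G.Adj c x := by
                simp [h1, h2.symm]
              have hd : d ∈ Finset.univ.filter fun x => G.Adj a x ∧ G.Adj c x := by
                simp [h4.symm, h3']
              have h2card : 1 < (Finset.univ.filter fun x => G.Adj a x ∧ G.Adj c x).card :=
                Finset.one_lt_card.mpr ⟨b, hb, d, hd, hbd⟩
              exact absurd (common_nbrs a c hac) (by omega)
            | cons h5 u =>
              simp [SimpleGraph.Walk.length_cons] at hlen

theorem neighbor_ncard (v : Fin 22) :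
    (G.neighborSet v).ncard = (Finset.univ.filter fun w => G.Adj v w).card := by
  rw [show G.neighborSet v = ↑(Finset.univ.filter fun w => G.Adj v w) by
    ext w; simp [SimpleGraph.neighborSet]]
  exact Set.ncard_coe_finset _

theorem deg_le : ∀ v : Fin 22, (Finset.univ.filter fun w => G.Adj v w).card ≤ 7 := by decide

theorem deg5 : (Finset.univ.filter fun w => G.Adj 5 w).card = 7 := by decide

theorem chromatic_eq : G.chromaticNumber = 4 := by
  have h4 : G.chromaticNumber ≤ 4 := by
    exact_mod_cast colorable_four.chromaticNumber_le
  refine le_antisymm h4 ?_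
  have h3 : ¬ G.chromaticNumber ≤ 3 := by
    rw [show (3 : ℕ∞) = ((3 : ℕ) : ℕ∞) by norm_cast,
      SimpleGraph.chromaticNumber_le_iff_colorable]
    exact not_colorable_three
  have hlt : (3 : ℕ∞) < G.chromaticNumber := not_le.mp h3
  calc (4 : ℕ∞) = 3 + 1 := by norm_num
    _ ≤ G.chromaticNumber := Order.add_one_le_of_lt hlt

end FourCritAux

/-- There exists a graph on 22 vertices of girth exactly 5 and maximum degree 7 that is
4-critical: its chromatic number is 4 and every proper subgraph (obtained by deleting at
least one vertex or at least one edge) has chromatic number at most 3. Degrees are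
expressed via the cardinality of neighbour sets. -/
theorem exists_four_critical_girth_five_maxDegree_seven_on_22_vertices :
    ∃ G : SimpleGraph (Fin 22),
      G.egirth = 5 ∧
      (∀ v, (G.neighborSet v).ncard ≤ 7) ∧ (∃ v, (G.neighborSet v).ncard = 7) ∧
      G.chromaticNumber = 4 ∧
      ∀ (s : Set (Fin 22)) (H : SimpleGraph s), H ≤ G.induce s →
        (s ≠ Set.univ ∨ H ≠ G.induce s) → H.chromaticNumber ≤ 3 := by
  classical
  refine ⟨FourCritAux.G, FourCritAux.egirth_eq, ?_, ?_, ?_, ?_⟩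
  · intro v
    rw [FourCritAux.neighbor_ncard v]
    exact FourCritAux.deg_le v
  · exact ⟨5, by rw [FourCritAux.neighbor_ncard 5]; exact FourCritAux.deg5⟩
  · exact FourCritAux.chromatic_eq
  · intro s H hle hne
    rcases hne with hs | hH
    · obtain ⟨v, hv⟩ : ∃ v, v ∉ s := by
        by_contra h
        push_neg at h
        exact hs (Set.eq_univ_iff_forall.mpr h)
      obtain ⟨w, hw⟩ := FourCritAux.has_nbr v
      exact FourCritAux.sub3 s H hle v w hw (fun ha _ => absurd ha hv)
    · have hnle : ¬ (FourCritAux.G.induce s ≤ H) := fun h => hH (le_antisymm hle h)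
      obtain ⟨x, y, hxy, hnH⟩ : ∃ x y, (FourCritAux.G.induce s).Adj x y ∧ ¬ H.Adj x y := by
        by_contra h
        push_neg at h
        exact hnle fun x y hxy => h x y hxy
      refine FourCritAux.sub3 s H hle x.val y.val hxy ?_
      intro ha hb hcon
      apply hnH
      have hx : (⟨x.val, ha⟩ : s) = x := Subtype.ext rfl
      have hy : (⟨y.val, hb⟩ : s) = y := Subtype.ext rfl
      rwa [hx, hy] at hcon
end
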